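/- Let Λ be a directed set admitting a countable cofinal subset and let (G_α, f_{αβ}) be an inverse system of countable discrete abelian groups over Λ. Then the inverse limit lim G_α, with the subspace topology from the product of the discrete topologies, is homeomorphic to one of the following five spaces: a finite discrete space; ℕ with the discrete topology; the Cantor space ℕ → Bool; the product ℕ × (ℕ → Bool) of the discrete space ℕ with the Cantor space; or the Baire space ℕ → ℕ. -/
import Mathlib


/-- The inverse limit of an inverse system of abelian groups over a preorder `Λ`,
as the `AddSubgroup` of coherent tuples in the product group `∀ α, G α`. -/
def invLimSys {Λ : Type*} [Preorder Λ] (G : Λ → Type*) [∀ α, AddCommGroup (G α)]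
    (f : ∀ ⦃α β : Λ⦄, α ≤ β → (G β →+ G α)) : AddSubgroup (∀ α, G α) where
  carrier := {x | ∀ ⦃α β : Λ⦄ (h : α ≤ β), x α = f h (x β)}
  add_mem' := by
    intro a b ha hb α β h
    show a α + b α = f h (a β + b β)
    rw [map_add, ← ha h, ← hb h]
  zero_mem' := by
    intro α β h
    show (0 : G α) = f h 0
    rw [map_zero]
  neg_mem' := by
    intro a ha α β h
    show -(a α) = f h (-(a β))
    rw [map_neg, ← ha h]

namespace InvLimAux

/-- An equiv between discrete spaces, as a homeomorphism. -/
def homeoOfDiscrete {X Y : Type*} [TopologicalSpace X] [TopologicalSpace Y]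
    [DiscreteTopology X] [DiscreteTopology Y] (e : X ≃ Y) : X ≃ₜ Y :=
  ⟨e, continuous_of_discreteTopology, continuous_of_discreteTopology⟩

/-- A nonempty subsingleton space is homeomorphic to `PUnit`. -/
noncomputable def homeoPUnit {X : Type*} [TopologicalSpace X] [Subsingleton X] [Nonempty X] :
    X ≃ₜ PUnit where
  toFun _ := PUnit.unit
  invFun _ := Classical.arbitrary X
  left_inv _ := Subsingleton.elim _ _
  right_inv _ := rfl
  continuous_toFun := continuous_const
  continuous_invFun := continuous_const

/-- Splitting off the head of a countable product. -/
def piConsHomeo {Y : ℕ → Type*} [∀ n, TopologicalSpace (Y n)] :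
    (∀ n, Y n) ≃ₜ Y 0 × ∀ n, Y (n + 1) where
  toFun x := (x 0, fun n => x (n + 1))
  invFun p n := Nat.rec p.1 (fun k _ => p.2 k) n
  left_inv x := by funext n; cases n <;> rfl
  right_inv p := by constructor
  continuous_toFun := (continuous_apply 0).prodMk
    (continuous_pi fun n => continuous_apply (n + 1))
  continuous_invFun := continuous_pi fun n => by
    cases n with
    | zero => exact continuous_fst
    | succ k => exact (continuous_apply k).comp continuous_snd

/-- `Equiv.piCurry` as a homeomorphism. -/
def piCurryHomeo {ι : Type*} {κ : ι → Type*} (Y : ∀ i, κ i → Type*)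
    [∀ i j, TopologicalSpace (Y i j)] :
    (∀ p : Σ i, κ i, Y p.1 p.2) ≃ₜ ∀ i, ∀ j, Y i j where
  toEquiv := Equiv.piCurry Y
  continuous_toFun := continuous_pi fun i => continuous_pi fun j =>
    (continuous_apply (⟨i, j⟩ : Σ i, κ i))
  continuous_invFun := continuous_pi fun p =>
    (continuous_apply p.2).comp (continuous_apply p.1)


def app (w : List Bool) (z : ℕ → Bool) : ℕ → Bool := fun n =>
  if h : n < w.length then w.get ⟨n, h⟩ else z (n - w.length)

lemma app_ge (w : List Bool) (z : ℕ → Bool) (n : ℕ) :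
    app w z (n + w.length) = z n := by simp [app]

lemma app_unary_lt (i n : ℕ) (z : ℕ → Bool) (hn : n < i) :
    app (List.replicate i true ++ [false]) z n = true := by
  have hlen : n < (List.replicate i true ++ [false]).length := by simp; omega
  simp only [app, dif_pos hlen, List.get_eq_getElem]
  rw [List.getElem_append_left (by simpa using hn)]
  simp

lemma app_unary_self (i : ℕ) (z : ℕ → Bool) :
    app (List.replicate i true ++ [false]) z i = false := by
  have hlen : i < (List.replicate i true ++ [false]).length := by simp
  simp only [app, dif_pos hlen, List.get_eq_getElem]
  rw [List.getElem_append_right (by simp)]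
  simp

lemma app_rep (c n : ℕ) (z : ℕ → Bool) (hn : n < c) :
    app (List.replicate c true) z n = true := by
  have hlen : n < (List.replicate c true).length := by simpa using hn
  simp only [app, dif_pos hlen, List.get_eq_getElem]
  simp

def cw (m i : ℕ) : List Bool :=
  if m ≤ 1 then [false]
  else if i < m - 1 then List.replicate i true ++ [false]
  else List.replicate (m - 1) true

lemma cw_len_pos (m i : ℕ) : 0 < (cw m i).length := by
  unfold cw; split_ifs <;> simp <;> omega

def sym (m : ℕ) (y : ℕ → Bool) : ℕ :=
  if h : ∃ j, j < m - 1 ∧ y j = false then Nat.find h else m - 1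

lemma sym_lt {m : ℕ} (hm : 1 ≤ m) (y : ℕ → Bool) : sym m y < m := by
  unfold sym; split_ifs with h
  · have := (Nat.find_spec h).1; omega
  · omega

def clen (m : ℕ) (y : ℕ → Bool) : ℕ := (cw m (sym m y)).length

lemma sym_app {m i : ℕ} (hm : 1 ≤ m) (hi : i < m) (z : ℕ → Bool) :
    sym m (app (cw m i) z) = i := by
  by_cases h1 : m ≤ 1
  · have hm1 : m = 1 := by omega
    have hi0 : i = 0 := by omega
    subst hm1; subst hi0
    unfold sym
    rw [dif_neg]
    rintro ⟨j, hj, -⟩; omega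
  · by_cases hi1 : i < m - 1
    · have hw : cw m i = List.replicate i true ++ [false] := by
        unfold cw; rw [if_neg h1, if_pos hi1]
      have happ_i : app (cw m i) z i = false := by rw [hw]; exact app_unary_self i z
      have hlt : ∀ j < i, app (cw m i) z j = true := fun j hj => by
        rw [hw]; exact app_unary_lt i j z hj
      unfold sym
      rw [dif_pos ⟨i, hi1, happ_i⟩, Nat.find_eq_iff]
      exact ⟨⟨hi1, happ_i⟩, fun j hj => by
        rintro ⟨-, hf⟩; rw [hlt j hj] at hf; exact Bool.noConfusion hf⟩
    · have hie : i = m - 1 := by omega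
      have hw : cw m i = List.replicate (m - 1) true := by
        unfold cw; rw [if_neg h1, if_neg hi1]
      unfold sym
      rw [dif_neg, hie]
      rintro ⟨j, hj, hf⟩
      rw [hw, app_rep (m - 1) j z hj] at hf
      exact Bool.noConfusion hf

lemma app_sym {m : ℕ} (hm : 2 ≤ m) (y : ℕ → Bool) (n : ℕ) :
    app (cw m (sym m y)) (fun j => y (j + clen m y)) n = y n := by
  have h1 : ¬ m ≤ 1 := by omega
  by_cases h : ∃ j, j < m - 1 ∧ y j = false
  · have hsym : sym m y = Nat.find h := by unfold sym; rw [dif_pos h]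
    set s := Nat.find h with hs
    have hspec := Nat.find_spec h
    have hmin : ∀ j < s, y j = true := by
      intro j hj
      have hno := Nat.find_min h hj
      by_contra hne
      exact hno ⟨by omega, by simpa using hne⟩
    have hw : cw m s = List.replicate s true ++ [false] := by
      unfold cw; rw [if_neg h1, if_pos hspec.1]
    have hlen : (cw m (sym m y)).length = s + 1 := by rw [hsym, hw]; simp
    have hcl : clen m y = s + 1 := hlen
    rw [hsym, hw]
    by_cases hn : n < s + 1
    · rcases Nat.lt_or_ge n s with h2 | h2
      · rw [app_unary_lt s n _ h2, hmin n h2]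
      · have hns : n = s := by omega
        subst hns
        rw [app_unary_self, hspec.2]
    · have hrw : n = (n - (s + 1)) + (List.replicate s true ++ [false]).length := by
        simp; omega
      rw [hrw, app_ge]
      simp only [hcl]
      congr 1; omega
  · have hsym : sym m y = m - 1 := by unfold sym; rw [dif_neg h]
    have hall : ∀ j < m - 1, y j = true := by
      intro j hj
      by_contra hne
      exact h ⟨j, hj, by simpa using hne⟩
    have hw : cw m (m - 1) = List.replicate (m - 1) true := by
      unfold cw; rw [if_neg h1, if_neg (by omega)]
    have hcl : clen m y = m - 1 := by
      unfold clen; rw [hsym, hw]; simp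
    rw [hsym, hw]
    by_cases hn : n < m - 1
    · rw [app_rep _ _ _ hn, hall n hn]
    · have hrw : n = (n - (m - 1)) + (List.replicate (m - 1) true).length := by
        simp; omega
      rw [hrw, app_ge]
      simp only [hcl]
      congr 1; omega

def Hfun : ℕ → (m : ℕ → ℕ) → (∀ k, Fin (m k)) → Bool
  | n, m, x =>
    if h : n < (cw (m 0) (x 0 : ℕ)).length then (cw (m 0) (x 0 : ℕ)).get ⟨n, h⟩
    else Hfun (n - (cw (m 0) (x 0 : ℕ)).length) (fun k => m (k + 1)) (fun k => x (k + 1))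
  termination_by n => n
  decreasing_by have := cw_len_pos (m 0) (x 0 : ℕ); omega

lemma Hfun_app (n : ℕ) (m : ℕ → ℕ) (x : ∀ k, Fin (m k)) :
    Hfun n m x
      = app (cw (m 0) (x 0 : ℕ))
          (fun j => Hfun j (fun k => m (k + 1)) (fun k => x (k + 1))) n := by
  rw [Hfun]; rfl

def Gsym : ℕ → (ℕ → ℕ) → (ℕ → Bool) → ℕ
  | 0, m, y => sym (m 0) y
  | k + 1, m, y => Gsym k (fun j => m (j + 1)) (fun n => y (n + clen (m 0) y))

lemma Gsym_lt : ∀ (k : ℕ) (m : ℕ → ℕ), (∀ j, 2 ≤ m j) → ∀ y, Gsym k m y < m k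
  | 0, m, hm, y => sym_lt (by have := hm 0; omega) y
  | k + 1, m, hm, y => Gsym_lt k _ (fun j => hm (j + 1)) _

noncomputable def pack (m : ℕ → ℕ) (hm : ∀ j, 2 ≤ m j) (y : ℕ → Bool) : ∀ k, Fin (m k) :=
  fun k => ⟨Gsym k m y, Gsym_lt k m hm y⟩

lemma Gsym_Hfun : ∀ (k : ℕ) (m : ℕ → ℕ), (∀ j, 2 ≤ m j) → ∀ x : ∀ k, Fin (m k),
    Gsym k m (fun n => Hfun n m x) = (x k : ℕ) := by
  intro k
  induction k with
  | zero =>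
    intro m hm x
    show sym (m 0) (fun n => Hfun n m x) = (x 0 : ℕ)
    have he : (fun n => Hfun n m x)
        = app (cw (m 0) (x 0 : ℕ)) (fun j => Hfun j (fun k => m (k + 1)) (fun k => x (k + 1))) :=
      funext fun n => Hfun_app n m x
    rw [he, sym_app (by have := hm 0; omega) (x 0).isLt]
  | succ k IH =>
    intro m hm x
    have he : (fun n => Hfun n m x)
        = app (cw (m 0) (x 0 : ℕ)) (fun j => Hfun j (fun k => m (k + 1)) (fun k => x (k + 1))) :=
      funext fun n => Hfun_app n m x
    have hsym : sym (m 0) (fun n => Hfun n m x) = (x 0 : ℕ) := by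
      rw [he, sym_app (by have := hm 0; omega) (x 0).isLt]
    have hclen : clen (m 0) (fun n => Hfun n m x) = (cw (m 0) (x 0 : ℕ)).length := by
      unfold clen; rw [hsym]
    show Gsym k (fun j => m (j + 1))
        (fun n => (fun n => Hfun n m x) (n + clen (m 0) (fun n => Hfun n m x))) = _
    have hdrop : (fun n => (fun n => Hfun n m x) (n + clen (m 0) (fun n => Hfun n m x)))
        = fun n => Hfun n (fun k => m (k + 1)) (fun k => x (k + 1)) := by
      funext n
      simp only [hclen]
      rw [Hfun_app (n + (cw (m 0) (x 0 : ℕ)).length) m x, app_ge]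
    rw [hdrop]
    exact IH (fun j => m (j + 1)) (fun j => hm (j + 1)) (fun k => x (k + 1))

lemma Hfun_pack : ∀ (n : ℕ) (m : ℕ → ℕ) (hm : ∀ j, 2 ≤ m j) (y : ℕ → Bool),
    Hfun n m (pack m hm y) = y n := by
  intro n
  induction n using Nat.strong_induction_on with
  | _ n IH =>
    intro m hm y
    have hx0 : ((pack m hm y 0 : Fin (m 0)) : ℕ) = sym (m 0) y := rfl
    have hm0 : 2 ≤ m 0 := hm 0
    have hsplit := app_sym hm0 y
    rw [Hfun_app, hx0]
    by_cases hn : n < (cw (m 0) (sym (m 0) y)).length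
    · have := hsplit n
      rw [app] at this ⊢
      rw [dif_pos hn] at this ⊢
      exact this
    · rw [app, dif_neg hn]
      have hshift : (fun k => pack m hm y (k + 1))
          = pack (fun j => m (j + 1)) (fun j => hm (j + 1)) (fun n => y (n + clen (m 0) y)) := by
        funext k
        apply Fin.ext
        rfl
      rw [hshift]
      have hlt : n - (cw (m 0) (sym (m 0) y)).length < n := by
        have := cw_len_pos (m 0) (sym (m 0) y); omega
      rw [IH _ hlt _ (fun j => hm (j + 1)) _]
      have := hsplit n
      rw [app, dif_neg hn] at this
      exact this

lemma Hfun_depends : ∀ (n : ℕ) (m : ℕ → ℕ) (x x' : ∀ k, Fin (m k)),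
    (∀ k, k ≤ n → x k = x' k) → Hfun n m x = Hfun n m x' := by
  intro n
  induction n using Nat.strong_induction_on with
  | _ n IH =>
    intro m x x' hagree
    have h0 : ((x 0 : Fin (m 0)) : ℕ) = ((x' 0 : Fin (m 0)) : ℕ) := by
      rw [hagree 0 (Nat.zero_le n)]
    rw [Hfun_app, Hfun_app, h0]
    by_cases hn : n < (cw (m 0) ((x' 0 : Fin (m 0)) : ℕ)).length
    · rw [app, app, dif_pos hn, dif_pos hn]
    · rw [app, app, dif_neg hn, dif_neg hn]
      have hpos := cw_len_pos (m 0) ((x' 0 : Fin (m 0)) : ℕ)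
      apply IH
      · omega
      · intro k hk
        exact hagree (k + 1) (by omega)

noncomputable def codeEquiv (m : ℕ → ℕ) (hm : ∀ j, 2 ≤ m j) :
    (∀ k, Fin (m k)) ≃ (ℕ → Bool) where
  toFun x n := Hfun n m x
  invFun y := pack m hm y
  left_inv x := funext fun k => Fin.ext (Gsym_Hfun k m hm x)
  right_inv y := funext fun n => Hfun_pack n m hm y

lemma continuous_code (m : ℕ → ℕ) (hm : ∀ j, 2 ≤ m j) :
    Continuous (fun (x : ∀ k, Fin (m k)) (n : ℕ) => Hfun n m x) := by
  refine continuous_pi fun n => ?_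
  have key : (fun x : ∀ k, Fin (m k) => Hfun n m x)
      = (fun v : ∀ k : Fin (n + 1), Fin (m k) =>
          Hfun n m (fun k => if h : k < n + 1 then v ⟨k, h⟩
            else ⟨0, by have := hm k; omega⟩)) ∘ (fun x k => x k.val) := by
    funext x
    exact Hfun_depends n m x _ (fun k hk => by simp [Nat.lt_succ_of_le hk]) 
  rw [key]
  exact continuous_of_discreteTopology.comp (continuous_pi fun k => continuous_apply _)

noncomputable def codeHomeo (m : ℕ → ℕ) (hm : ∀ j, 2 ≤ m j) :
    (∀ k, Fin (m k)) ≃ₜ (ℕ → Bool) :=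
  Continuous.homeoOfEquivCompactToT2 (f := codeEquiv m hm) (continuous_code m hm)

/-- The five-fold classification predicate. -/
def FiveDisj (X : Type*) [TopologicalSpace X] : Prop :=
  (∃ (F : Type) (_ : TopologicalSpace F) (_ : DiscreteTopology F),
      Finite F ∧ Nonempty (X ≃ₜ F)) ∨
    Nonempty (X ≃ₜ ℕ) ∨ Nonempty (X ≃ₜ (ℕ → Bool)) ∨
    Nonempty (X ≃ₜ ℕ × (ℕ → Bool)) ∨ Nonempty (X ≃ₜ (ℕ → ℕ))

lemma FiveDisj.of_homeo {X Y : Type*} [TopologicalSpace X] [TopologicalSpace Y]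
    (e : X ≃ₜ Y) (h : FiveDisj Y) : FiveDisj X := by
  obtain (⟨F, tF, dF, hF, g⟩ | g | g | g | g) := h
  · exact Or.inl ⟨F, tF, dF, hF, g.elim fun g => ⟨e.trans g⟩⟩
  · exact Or.inr (Or.inl (g.elim fun g => ⟨e.trans g⟩))
  · exact Or.inr (Or.inr (Or.inl (g.elim fun g => ⟨e.trans g⟩)))
  · exact Or.inr (Or.inr (Or.inr (Or.inl (g.elim fun g => ⟨e.trans g⟩))))
  · exact Or.inr (Or.inr (Or.inr (Or.inr (g.elim fun g => ⟨e.trans g⟩))))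

/-- A countably infinite discrete space is homeomorphic to `ℕ`. -/
noncomputable def natHomeo (Y : Type*) [TopologicalSpace Y] [DiscreteTopology Y]
    [Countable Y] [Infinite Y] : Y ≃ₜ ℕ :=
  homeoOfDiscrete (nonempty_equiv_of_countable.some)

lemma classify_discrete {X Y : Type*} [TopologicalSpace X] [TopologicalSpace Y]
    [DiscreteTopology Y] [Countable Y] (h : X ≃ₜ Y) : FiveDisj X := by
  cases finite_or_infinite Y with
  | inl hf =>
    exact Or.inl ⟨Fin (Nat.card Y), inferInstance, inferInstance, inferInstance,
      ⟨h.trans (homeoOfDiscrete (Finite.equivFin Y))⟩⟩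
  | inr hi => exact Or.inr (Or.inl ⟨h.trans (natHomeo Y)⟩)

noncomputable def cantorBool : (∀ _ : ℕ, Fin 2) ≃ₜ (ℕ → Bool) :=
  Homeomorph.piCongrRight fun _ => homeoOfDiscrete finTwoEquiv

noncomputable def finProdCantor (w : ℕ) (hw : 1 ≤ w) :
    (Fin w × (ℕ → Bool)) ≃ₜ (ℕ → Bool) := by
  by_cases h1 : w = 1
  · subst h1
    exact (Homeomorph.prodCongr (homeoOfDiscrete (Equiv.equivPUnit.{1, 1} (Fin 1)))
      (Homeomorph.refl _)).trans (Homeomorph.punitProd _)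
  · have h2 : 2 ≤ w := by omega
    let M : ℕ → ℕ := fun k => if k = 0 then w else 2
    have hM : ∀ k, 2 ≤ M k := fun k => by
      simp only [M]; split_ifs <;> omega
    exact (Homeomorph.prodCongr (homeoOfDiscrete (finCongr (show w = M 0 by simp [M])))
      ((cantorBool.symm).trans (Homeomorph.piCongrRight fun k =>
        homeoOfDiscrete (finCongr (show 2 = M (k + 1) by simp [M]))))).trans
      ((piConsHomeo (Y := fun k => Fin (M k))).symm.trans (codeHomeo M hM))

noncomputable def cantorAbsorbFinite (W : Type*) [TopologicalSpace W] [DiscreteTopology W]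
    [Finite W] [Nonempty W] : (W × (ℕ → Bool)) ≃ₜ (ℕ → Bool) :=
  (Homeomorph.prodCongr (homeoOfDiscrete (Finite.equivFin W)) (Homeomorph.refl _)).trans
    (finProdCantor (Nat.card W) Nat.card_pos)

noncomputable def baireAbsorb (D : Type*) [TopologicalSpace D] [DiscreteTopology D]
    [Countable D] [Nonempty D] : (D × (ℕ → ℕ)) ≃ₜ (ℕ → ℕ) :=
  let consN : (ℕ → ℕ) ≃ₜ ℕ × (ℕ → ℕ) := piConsHomeo (Y := fun _ => ℕ)
  ((Homeomorph.prodCongr (Homeomorph.refl D) consN).trans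
    ((Homeomorph.prodAssoc D ℕ (ℕ → ℕ)).symm.trans
      (Homeomorph.prodCongr (natHomeo (D × ℕ)) (Homeomorph.refl _)))).trans consN.symm

lemma nontrivial_pi {ι : Type*} (C : ι → Type*) [∀ i, Nonempty (C i)] (i₀ : ι)
    (h : Nontrivial (C i₀)) : Nontrivial (∀ i, C i) := by
  classical
  obtain ⟨x, y, hxy⟩ := h
  refine ⟨Function.update (fun i => Classical.arbitrary (C i)) i₀ x,
    Function.update (fun i => Classical.arbitrary (C i)) i₀ y, fun he => hxy ?_⟩
  have := congrFun he i₀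
  simpa using this

lemma infinite_pi {ι : Type*} (C : ι → Type*) [∀ i, Nonempty (C i)] (i₀ : ι)
    (h : Infinite (C i₀)) : Infinite (∀ i, C i) := by
  classical
  refine Infinite.of_injective
    (fun c : C i₀ => Function.update (fun i => Classical.arbitrary (C i)) i₀ c) ?_
  intro a b hab
  have := congrFun hab i₀
  simpa using this

section Blocks

lemma exists_ge_mem (A : Set ℕ) (hA : A.Infinite) (k : ℕ) : ∃ a, a ∈ A ∧ k ≤ a := by
  obtain ⟨b, hb, hkb⟩ := hA.exists_gt k
  exact ⟨b, hb, le_of_lt hkb⟩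

/-- The least element of `A` that is `≥ k`. -/
noncomputable def leastGE (A : Set ℕ) (hA : A.Infinite) (k : ℕ) : ℕ :=
  sInf {a | a ∈ A ∧ k ≤ a}

lemma leastGE_mem (A : Set ℕ) (hA : A.Infinite) (k : ℕ) :
    leastGE A hA k ∈ A ∧ k ≤ leastGE A hA k :=
  Nat.sInf_mem (exists_ge_mem A hA k)

lemma leastGE_le (A : Set ℕ) (hA : A.Infinite) {k a : ℕ} (ha : a ∈ A) (hka : k ≤ a) :
    leastGE A hA k ≤ a :=
  Nat.sInf_le ⟨ha, hka⟩

/-- Block assignment map `ℕ → A`. -/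
noncomputable def blockOf (A : Set ℕ) (hA : A.Infinite) (k : ℕ) : A :=
  ⟨leastGE A hA k, (leastGE_mem A hA k).1⟩

lemma blockOf_self (A : Set ℕ) (hA : A.Infinite) (a : A) : blockOf A hA (a : ℕ) = a :=
  Subtype.ext (le_antisymm (leastGE_le A hA a.2 le_rfl) (leastGE_mem A hA (a : ℕ)).2)

lemma le_blockOf (A : Set ℕ) (hA : A.Infinite) (k : ℕ) : k ≤ (blockOf A hA k : ℕ) :=
  (leastGE_mem A hA k).2

instance blockFiber_finite (A : Set ℕ) (hA : A.Infinite) (a : A) :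
    Finite {k // blockOf A hA k = a} := by
  refine Finite.of_injective (fun p => (⟨p.1, ?_⟩ : Fin ((a : ℕ) + 1))) ?_
  · have h1 := le_blockOf A hA p.1
    have h2 : (blockOf A hA p.1 : ℕ) = (a : ℕ) := congrArg Subtype.val p.2
    omega
  · intro p q hpq
    exact Subtype.ext (congrArg Fin.val hpq)

/-- The canonical element of the fiber over `a`. -/
noncomputable def blockSelf (A : Set ℕ) (hA : A.Infinite) (a : A) :
    {k // blockOf A hA k = a} :=
  ⟨(a : ℕ), blockOf_self A hA a⟩

/-- Regrouping a countable product along the blocks determined by an infinite `A ⊆ ℕ`. -/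
noncomputable def blockHomeo (A : Set ℕ) (hA : A.Infinite) (C : ℕ → Type*)
    [∀ n, TopologicalSpace (C n)] :
    (∀ n, C n) ≃ₜ ∀ a : A, ∀ k : {k // blockOf A hA k = a}, C k.1 :=
  (Homeomorph.piCongrLeft (Y := C) (Equiv.sigmaFiberEquiv (blockOf A hA))).symm.trans
    (piCurryHomeo (fun (a : A) (b : {k // blockOf A hA k = a}) => C b.1))

end Blocks

theorem classify_prod {D : Type*} {C : ℕ → Type*}
    [TopologicalSpace D] [DiscreteTopology D] [Countable D] [Nonempty D]
    [∀ n, TopologicalSpace (C n)] [∀ n, DiscreteTopology (C n)]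
    [∀ n, Countable (C n)] [∀ n, Nonempty (C n)] :
    FiveDisj (D × ∀ n, C n) := by
  classical
  by_cases hT : {n | Nontrivial (C n)}.Finite
  · -- all but finitely many factors are singletons: the space is countable discrete
    haveI : Finite {n // Nontrivial (C n)} := hT.to_subtype
    haveI : ∀ i : {n // ¬ Nontrivial (C n)}, Subsingleton (C i.1) :=
      fun i => not_nontrivial_iff_subsingleton.mp i.2
    have e1 : (∀ n, C n) ≃ₜ (∀ i : {n // Nontrivial (C n)}, C i.1)
        × (∀ i : {n // ¬ Nontrivial (C n)}, C i.1) :=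
      Homeomorph.piEquivPiSubtypeProd (fun n => Nontrivial (C n)) C
    have e2 : (∀ i : {n // ¬ Nontrivial (C n)}, C i.1) ≃ₜ PUnit.{1} := homeoPUnit
    have e3 : (D × ∀ n, C n) ≃ₜ D × (∀ i : {n // Nontrivial (C n)}, C i.1) :=
      (Homeomorph.prodCongr (Homeomorph.refl D)
        (e1.trans ((Homeomorph.prodCongr (Homeomorph.refl _) e2).trans
          (Homeomorph.prodPUnit _)))) 
    exact classify_discrete e3
  · have hTi : {n | Nontrivial (C n)}.Infinite := hT
    by_cases hI : {n | Infinite (C n)}.Finite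
    · -- finitely many infinite factors, infinitely many nontrivial finite factors: Cantor side
      haveI : Finite {n // Infinite (C n)} := hI.to_subtype
      have e1 : (∀ n, C n) ≃ₜ (∀ i : {n // Infinite (C n)}, C i.1)
          × (∀ i : {n // ¬ Infinite (C n)}, C i.1) :=
        Homeomorph.piEquivPiSubtypeProd (fun n => Infinite (C n)) C
      set ι := {n // ¬ Infinite (C n)} with hι
      haveI hfinC : ∀ i : ι, Finite (C i.1) := fun i => not_infinite_iff_finite.mp i.2
      haveI : Infinite {n // n ∈ {n | Nontrivial (C n)} \ {n | Infinite (C n)}} :=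
        (hTi.diff hI).to_subtype
      haveI : Infinite ι := by
        refine Infinite.of_injective
          (fun x : {n // n ∈ {n | Nontrivial (C n)} \ {n | Infinite (C n)}} =>
            (⟨x.1, x.2.2⟩ : ι)) ?_
        intro a b hab
        exact Subtype.ext (Subtype.mk_eq_mk.mp hab)
      let eι : ι ≃ ℕ := nonempty_equiv_of_countable.some
      let C' : ℕ → Type _ := fun k => C (eι.symm k).1
      have e2 : (∀ k : ℕ, C' k) ≃ₜ (∀ i : ι, C i.1) :=
        Homeomorph.piCongrLeft (Y := fun i : ι => C i.1) eι.symm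
      haveI : ∀ k, Finite (C' k) := fun k => hfinC (eι.symm k)
      haveI : ∀ k, Nonempty (C' k) := fun k => inferInstanceAs (Nonempty (C (eι.symm k).1))
      -- the set of nontrivial coordinates of C' is infinite
      have hA' : {k | Nontrivial (C' k)}.Infinite := by
        rw [← Set.infinite_coe_iff]
        refine Infinite.of_injective
          (fun x : {n // n ∈ {n | Nontrivial (C n)} \ {n | Infinite (C n)}} =>
            (⟨eι ⟨x.1, x.2.2⟩, ?_⟩ : {k | Nontrivial (C' k)})) ?_
        · show Nontrivial (C (eι.symm (eι ⟨x.1, x.2.2⟩)).1)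
          rw [Equiv.symm_apply_apply]
          exact x.2.1
        · intro a b hab
          have h0 : eι ⟨a.1, a.2.2⟩ = eι ⟨b.1, b.2.2⟩ := by simpa using hab
          have h1 := eι.injective h0
          exact Subtype.ext (Subtype.mk_eq_mk.mp h1)
      set A' := {k | Nontrivial (C' k)} with hA'def
      have e3 : (∀ k, C' k) ≃ₜ ∀ a : A', ∀ k : {k // blockOf A' hA' k = a}, C' k.1 :=
        blockHomeo A' hA' C'
      haveI hZfin : ∀ a : A', Finite (∀ k : {k // blockOf A' hA' k = a}, C' k.1) := by
        intro a; infer_instance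
      have hZnt : ∀ a : A', Nontrivial (∀ k : {k // blockOf A' hA' k = a}, C' k.1) := by
        intro a
        exact nontrivial_pi _ (blockSelf A' hA' a) a.2
      have hm2 : ∀ a : A', 2 ≤ Nat.card (∀ k : {k // blockOf A' hA' k = a}, C' k.1) := by
        intro a
        exact Finite.one_lt_card_iff_nontrivial.mpr (hZnt a)
      haveI : Infinite A' := hA'.to_subtype
      let eA : (ℕ : Type) ≃ A' := nonempty_equiv_of_countable.some
      let m : ℕ → ℕ := fun j => Nat.card (∀ k : {k // blockOf A' hA' k = eA j}, C' k.1)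
      have hm : ∀ j, 2 ≤ m j := fun j => hm2 (eA j)
      have e4 : (∀ a : A', ∀ k : {k // blockOf A' hA' k = a}, C' k.1) ≃ₜ (∀ j : ℕ, Fin (m j)) :=
        (Homeomorph.piCongrLeft
          (Y := fun a : A' => ∀ k : {k // blockOf A' hA' k = a}, C' k.1) eA).symm.trans
          (Homeomorph.piCongrRight fun j => homeoOfDiscrete (Finite.equivFin _))
      have cantorPart : (∀ i : ι, C i.1) ≃ₜ (ℕ → Bool) :=
        e2.symm.trans (e3.trans (e4.trans (codeHomeo m hm)))
      -- now assemble
      set E := ∀ i : {n // Infinite (C n)}, C i.1 with hE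
      have eX : (D × ∀ n, C n) ≃ₜ (D × E) × (ℕ → Bool) :=
        (Homeomorph.prodCongr (Homeomorph.refl D)
          (e1.trans (Homeomorph.prodCongr (Homeomorph.refl E) cantorPart))).trans
          (Homeomorph.prodAssoc D E (ℕ → Bool)).symm
      by_cases hW : Finite (D × E)
      · refine Or.inr (Or.inr (Or.inl ⟨eX.trans (cantorAbsorbFinite (D × E))⟩))
      · haveI : Infinite (D × E) := not_finite_iff_infinite.mp hW
        refine Or.inr (Or.inr (Or.inr (Or.inl ⟨eX.trans
          (Homeomorph.prodCongr (natHomeo (D × E)) (Homeomorph.refl _))⟩)))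
    · -- infinitely many infinite factors: Baire space
      have hIi : {n | Infinite (C n)}.Infinite := hI
      set A := {n | Infinite (C n)} with hAdef
      have e1 : (∀ n, C n) ≃ₜ ∀ a : A, ∀ k : {k // blockOf A hIi k = a}, C k.1 :=
        blockHomeo A hIi C
      have hZinf : ∀ a : A, Infinite (∀ k : {k // blockOf A hIi k = a}, C k.1) := by
        intro a
        exact infinite_pi _ (blockSelf A hIi a) a.2
      have e2 : (∀ a : A, ∀ k : {k // blockOf A hIi k = a}, C k.1) ≃ₜ (∀ a : A, ℕ) :=
        Homeomorph.piCongrRight fun a =>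
          haveI := hZinf a
          natHomeo _
      haveI : Infinite A := hIi.to_subtype
      let eA : A ≃ ℕ := nonempty_equiv_of_countable.some
      have e3 : (∀ a : A, ℕ) ≃ₜ (ℕ → ℕ) :=
        Homeomorph.piCongrLeft (Y := fun _ : ℕ => ℕ) eA
      have eX : (D × ∀ n, C n) ≃ₜ (ℕ → ℕ) :=
        (Homeomorph.prodCongr (Homeomorph.refl D) (e1.trans (e2.trans e3))).trans
          (baireAbsorb D)
      exact Or.inr (Or.inr (Or.inr (Or.inr ⟨eX⟩)))

section MainAux

variable {Λ : Type*} [Preorder Λ]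

/-- An increasing sequence dominating a given sequence, in a directed order. -/
noncomputable def chain [IsDirected Λ (· ≤ ·)] (e : ℕ → Λ) : ℕ → Λ
  | 0 => e 0
  | n + 1 => (directed_of (· ≤ ·) (chain e n) (e (n + 1))).choose

lemma chain_le_succ [IsDirected Λ (· ≤ ·)] (e : ℕ → Λ) (n : ℕ) :
    chain e n ≤ chain e (n + 1) :=
  (directed_of (· ≤ ·) (chain e n) (e (n + 1))).choose_spec.1

lemma le_chain [IsDirected Λ (· ≤ ·)] (e : ℕ → Λ) (n : ℕ) : e n ≤ chain e n := by
  cases n with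
  | zero => exact le_refl _
  | succ n => exact (directed_of (· ≤ ·) (chain e n) (e (n + 1))).choose_spec.2

lemma chain_mono [IsDirected Λ (· ≤ ·)] (e : ℕ → Λ) : Monotone (chain e) :=
  monotone_nat_of_le_succ (chain_le_succ e)

variable (G : Λ → Type*) [∀ α, AddCommGroup (G α)]
  (f : ∀ ⦃α β : Λ⦄, α ≤ β → (G β →+ G α)) (a : ℕ → Λ)

lemma coherent (x : invLimSys G f) {α β : Λ} (h : α ≤ β) :
    (x : ∀ γ, G γ) α = f h ((x : ∀ γ, G γ) β) := x.2 h

lemma coord_zero (x : invLimSys G f) {α β : Λ} (h : α ≤ β)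
    (hz : (x : ∀ γ, G γ) β = 0) : (x : ∀ γ, G γ) α = 0 := by
  rw [coherent G f x h, hz, map_zero]

/-- Set of values at `a 0` of elements of the inverse limit. -/
def DS : Set (G (a 0)) := {g | ∃ z : invLimSys G f, (z : ∀ γ, G γ) (a 0) = g}

/-- Set of values at `a (n+1)` of elements of the inverse limit vanishing at `a n`. -/
def CS (n : ℕ) : Set (G (a (n + 1))) :=
  {g | ∃ z : invLimSys G f, (z : ∀ γ, G γ) (a n) = 0 ∧ (z : ∀ γ, G γ) (a (n + 1)) = g}

open Classical in
/-- A section of evaluation at `a 0`. -/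
noncomputable def secD (g : G (a 0)) : invLimSys G f :=
  if h : ∃ z : invLimSys G f, (z : ∀ γ, G γ) (a 0) = g then h.choose else 0

lemma secD_spec {g : G (a 0)} (h : ∃ z : invLimSys G f, (z : ∀ γ, G γ) (a 0) = g) :
    (secD G f a g : ∀ γ, G γ) (a 0) = g := by
  rw [secD, dif_pos h]; exact h.choose_spec

open Classical in
/-- A section of evaluation at `a (n+1)` on elements vanishing at `a n`. -/
noncomputable def secC (n : ℕ) (g : G (a (n + 1))) : invLimSys G f :=
  if h : ∃ z : invLimSys G f, (z : ∀ γ, G γ) (a n) = 0 ∧ (z : ∀ γ, G γ) (a (n + 1)) = g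
  then h.choose else 0

lemma secC_zero (n : ℕ) (g : G (a (n + 1))) :
    (secC G f a n g : ∀ γ, G γ) (a n) = 0 := by
  rw [secC]; split_ifs with h
  · exact h.choose_spec.1
  · simp

lemma secC_spec {n : ℕ} {g : G (a (n + 1))}
    (h : ∃ z : invLimSys G f, (z : ∀ γ, G γ) (a n) = 0 ∧ (z : ∀ γ, G γ) (a (n + 1)) = g) :
    (secC G f a n g : ∀ γ, G γ) (a (n + 1)) = g := by
  rw [secC, dif_pos h]; exact h.choose_spec.2

/-- Residuals of the successive coset decomposition. -/
noncomputable def resid (x : invLimSys G f) : ℕ → invLimSys G f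
  | 0 => x - secD G f a ((x : ∀ γ, G γ) (a 0))
  | n + 1 => resid x n - secC G f a n ((resid x n : ∀ γ, G γ) (a (n + 1)))

lemma resid_zero_def (x : invLimSys G f) :
    resid G f a x 0 = x - secD G f a ((x : ∀ γ, G γ) (a 0)) := rfl

lemma resid_succ_def (x : invLimSys G f) (n : ℕ) :
    resid G f a x (n + 1)
      = resid G f a x n - secC G f a n ((resid G f a x n : ∀ γ, G γ) (a (n + 1))) := rfl

lemma resid_vanish (x : invLimSys G f) : ∀ n, (resid G f a x n : ∀ γ, G γ) (a n) = 0
  | 0 => by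
    rw [resid_zero_def, AddSubgroup.coe_sub, Pi.sub_apply, secD_spec G f a ⟨x, rfl⟩, sub_self]
  | n + 1 => by
    rw [resid_succ_def, AddSubgroup.coe_sub, Pi.sub_apply,
      secC_spec G f a ⟨resid G f a x n, resid_vanish x n, rfl⟩, sub_self]

/-- Partial sums of the decomposition data. -/
noncomputable def psum (p : ↥(DS G f a) × ∀ n, ↥(CS G f a n)) (N : ℕ) : invLimSys G f :=
  secD G f a p.1.1 + ∑ j ∈ Finset.range N, secC G f a j (p.2 j).1

lemma psum_stable (hmono : Monotone a) (p : ↥(DS G f a) × ∀ n, ↥(CS G f a n))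
    {N M : ℕ} (hNM : N ≤ M) {α : Λ} (hα : α ≤ a N) :
    (psum G f a p M : ∀ γ, G γ) α = (psum G f a p N : ∀ γ, G γ) α := by
  induction M, hNM using Nat.le_induction with
  | base => rfl
  | succ M hNM IH =>
    have hstep : psum G f a p (M + 1) = psum G f a p M + secC G f a M (p.2 M).1 := by
      rw [psum, psum, Finset.sum_range_succ, add_assoc]
    rw [hstep, AddSubgroup.coe_add, Pi.add_apply,
      coord_zero G f _ (le_trans hα (hmono hNM)) (secC_zero G f a M (p.2 M).1), add_zero, IH]

end MainAux

section MainAux2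

variable {Λ : Type*} [Preorder Λ] (G : Λ → Type*) [∀ α, AddCommGroup (G α)]
  [∀ α, TopologicalSpace (G α)] [∀ α, DiscreteTopology (G α)]
  (f : ∀ ⦃α β : Λ⦄, α ≤ β → (G β →+ G α)) (a : ℕ → Λ)

/-- Reconstruct a coherent element from decomposition data. -/
noncomputable def phi (hmono : Monotone a) (hcofa : ∀ α, ∃ n, α ≤ a n)
    (p : ↥(DS G f a) × ∀ n, ↥(CS G f a n)) : invLimSys G f :=
  ⟨fun α => (psum G f a p (hcofa α).choose : ∀ γ, G γ) α, by
    intro α β h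
    show (psum G f a p (hcofa α).choose : ∀ γ, G γ) α
      = f h ((psum G f a p (hcofa β).choose : ∀ γ, G γ) β)
    have hα : α ≤ a (hcofa α).choose := (hcofa α).choose_spec
    have hβ : β ≤ a (hcofa β).choose := (hcofa β).choose_spec
    have h1 : (psum G f a p (max (hcofa α).choose (hcofa β).choose) : ∀ γ, G γ) α
        = (psum G f a p (hcofa α).choose : ∀ γ, G γ) α :=
      psum_stable G f a hmono p (le_max_left _ _) hα
    have h2 : (psum G f a p (max (hcofa α).choose (hcofa β).choose) : ∀ γ, G γ) β
        = (psum G f a p (hcofa β).choose : ∀ γ, G γ) β :=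
      psum_stable G f a hmono p (le_max_right _ _) hβ
    rw [← h1, ← h2]
    exact coherent G f _ h⟩

lemma phi_coord (hmono : Monotone a) (hcofa : ∀ α, ∃ n, α ≤ a n)
    (p : ↥(DS G f a) × ∀ n, ↥(CS G f a n)) {α : Λ} {N : ℕ} (hα : α ≤ a N) :
    (phi G f a hmono hcofa p : ∀ γ, G γ) α = (psum G f a p N : ∀ γ, G γ) α := by
  show (psum G f a p (hcofa α).choose : ∀ γ, G γ) α = _
  have h1 := psum_stable G f a hmono p (le_max_left (hcofa α).choose N) (hcofa α).choose_spec
  have h2 := psum_stable G f a hmono p (le_max_right (hcofa α).choose N) hα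
  rw [← h1, h2]

/-- The decomposition map. -/
noncomputable def psi (x : invLimSys G f) : ↥(DS G f a) × ∀ n, ↥(CS G f a n) :=
  (⟨(x : ∀ γ, G γ) (a 0), ⟨x, rfl⟩⟩,
   fun n => ⟨(resid G f a x n : ∀ γ, G γ) (a (n + 1)),
     ⟨resid G f a x n, resid_vanish G f a x n, rfl⟩⟩)

lemma psum_succ (p : ↥(DS G f a) × ∀ n, ↥(CS G f a n)) (n : ℕ) :
    psum G f a p (n + 1) = psum G f a p n + secC G f a n (p.2 n).1 := by
  rw [psum, psum, Finset.sum_range_succ, add_assoc]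

lemma psi_phi (hmono : Monotone a) (hcofa : ∀ α, ∃ n, α ≤ a n)
    (p : ↥(DS G f a) × ∀ n, ↥(CS G f a n)) : psi G f a (phi G f a hmono hcofa p) = p := by
  set x := phi G f a hmono hcofa p with hx
  have hd : (x : ∀ γ, G γ) (a 0) = p.1.1 := by
    rw [phi_coord G f a hmono hcofa p (le_refl (a 0))]
    have h0 : psum G f a p 0 = secD G f a p.1.1 := by rw [psum]; simp
    rw [h0, secD_spec G f a p.1.2]
  have key : ∀ n, resid G f a x n = x - psum G f a p n
      ∧ (resid G f a x n : ∀ γ, G γ) (a (n + 1)) = (p.2 n).1 := by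
    intro n
    induction n with
    | zero =>
      have h1 : resid G f a x 0 = x - psum G f a p 0 := by
        rw [resid_zero_def, hd]
        congr 1
        rw [psum]; simp
      refine ⟨h1, ?_⟩
      rw [h1, AddSubgroup.coe_sub, Pi.sub_apply,
        phi_coord G f a hmono hcofa p (le_refl (a 1)),
        psum_succ, AddSubgroup.coe_add, Pi.add_apply, add_sub_cancel_left]
      exact secC_spec G f a (p.2 0).2
    | succ n IH =>
      have h1 : resid G f a x (n + 1) = x - psum G f a p (n + 1) := by
        rw [resid_succ_def, IH.2, IH.1, sub_sub]
        congr 1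
        exact (psum_succ G f a p n).symm
      refine ⟨h1, ?_⟩
      rw [h1, AddSubgroup.coe_sub, Pi.sub_apply,
        phi_coord G f a hmono hcofa p (le_refl (a (n + 2))),
        psum_succ, AddSubgroup.coe_add, Pi.add_apply, add_sub_cancel_left]
      exact secC_spec G f a (p.2 (n + 1)).2
  refine Prod.ext (Subtype.ext hd) (funext fun n => Subtype.ext ((key n).2))

lemma psi_inj (hcofa : ∀ α, ∃ n, α ≤ a n) : Function.Injective (psi G f a) := by
  intro x y hxy
  have hd : (x : ∀ γ, G γ) (a 0) = (y : ∀ γ, G γ) (a 0) :=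
    congrArg (fun q : ↥(DS G f a) × ∀ n, ↥(CS G f a n) => (q.1 : G (a 0))) hxy
  have hc : ∀ n, (resid G f a x n : ∀ γ, G γ) (a (n + 1))
      = (resid G f a y n : ∀ γ, G γ) (a (n + 1)) := fun n =>
    congrArg (fun q : ↥(DS G f a) × ∀ n, ↥(CS G f a n) => (q.2 n : G (a (n + 1)))) hxy
  have hr : ∀ n, resid G f a x n - resid G f a y n = x - y := by
    intro n
    induction n with
    | zero =>
      rw [resid_zero_def, resid_zero_def, hd]
      exact sub_sub_sub_cancel_right _ _ _
    | succ n IH =>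
      rw [resid_succ_def, resid_succ_def, hc n]
      exact (sub_sub_sub_cancel_right _ _ _).trans IH
  have hz : ∀ α, ((x - y : invLimSys G f) : ∀ γ, G γ) α = 0 := by
    intro α
    obtain ⟨n, hn⟩ := hcofa α
    apply coord_zero G f _ hn
    rw [← hr n, AddSubgroup.coe_sub, Pi.sub_apply,
      resid_vanish G f a x n, resid_vanish G f a y n, sub_self]
  have hxy0 : x - y = 0 := Subtype.ext (funext fun α => hz α)
  exact sub_eq_zero.mp hxy0

lemma cont_eval (α : Λ) : Continuous fun x : invLimSys G f => (x : ∀ γ, G γ) α :=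
  (continuous_apply α).comp continuous_subtype_val

lemma cont_resid : ∀ (n : ℕ) (α : Λ),
    Continuous fun x : invLimSys G f => (resid G f a x n : ∀ γ, G γ) α := by
  intro n
  induction n with
  | zero =>
    intro α
    haveI : ContinuousSub (G α) := ⟨continuous_of_discreteTopology⟩
    have h2 : Continuous fun x : invLimSys G f =>
        (secD G f a ((x : ∀ γ, G γ) (a 0)) : ∀ γ, G γ) α :=
      Continuous.comp
        (continuous_of_discreteTopology (f := fun g : G (a 0) => (secD G f a g : ∀ γ, G γ) α))
        (cont_eval G f (a 0))
    have hrw : (fun x : invLimSys G f => (resid G f a x 0 : ∀ γ, G γ) α)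
        = fun x : invLimSys G f =>
          (x : ∀ γ, G γ) α - (secD G f a ((x : ∀ γ, G γ) (a 0)) : ∀ γ, G γ) α := by
      funext x; rw [resid_zero_def, AddSubgroup.coe_sub, Pi.sub_apply]
    rw [hrw]
    exact (cont_eval G f α).sub h2
  | succ n IH =>
    intro α
    haveI : ContinuousSub (G α) := ⟨continuous_of_discreteTopology⟩
    have h2 : Continuous fun x : invLimSys G f =>
        (secC G f a n ((resid G f a x n : ∀ γ, G γ) (a (n + 1))) : ∀ γ, G γ) α :=
      Continuous.comp
        (continuous_of_discreteTopology
          (f := fun g : G (a (n + 1)) => (secC G f a n g : ∀ γ, G γ) α))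
        (IH (a (n + 1)))
    have hrw : (fun x : invLimSys G f => (resid G f a x (n + 1) : ∀ γ, G γ) α)
        = fun x : invLimSys G f =>
          (resid G f a x n : ∀ γ, G γ) α
            - (secC G f a n ((resid G f a x n : ∀ γ, G γ) (a (n + 1))) : ∀ γ, G γ) α := by
      funext x; rw [resid_succ_def, AddSubgroup.coe_sub, Pi.sub_apply]
    rw [hrw]
    exact (IH α).sub h2

lemma cont_psi : Continuous (psi G f a) :=
  (Continuous.subtype_mk (cont_eval G f (a 0)) _).prodMk
    (continuous_pi fun n => Continuous.subtype_mk (cont_resid G f a n (a (n + 1))) _)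

lemma cont_psum (N : ℕ) (α : Λ) :
    Continuous fun p : ↥(DS G f a) × ∀ n, ↥(CS G f a n) => (psum G f a p N : ∀ γ, G γ) α := by
  have key : (fun p : ↥(DS G f a) × ∀ n, ↥(CS G f a n) => (psum G f a p N : ∀ γ, G γ) α)
      = (fun q : ↥(DS G f a) × (∀ j : Fin N, ↥(CS G f a j)) =>
          ((secD G f a q.1.1 + ∑ j : Fin N, secC G f a (j : ℕ) (q.2 j).1
            : invLimSys G f) : ∀ γ, G γ) α)
        ∘ fun p => (p.1, fun j : Fin N => p.2 j) := by
    funext p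
    simp only [Function.comp_apply]
    have h1 : psum G f a p N
        = secD G f a p.1.1 + ∑ j : Fin N, secC G f a (j : ℕ) (p.2 j).1 := by
      rw [psum, Finset.sum_range]
    rw [h1]
  rw [key]
  exact Continuous.comp continuous_of_discreteTopology
    (continuous_fst.prodMk (continuous_pi fun j => (continuous_apply (j : ℕ)).comp
      continuous_snd))

lemma cont_phi (hmono : Monotone a) (hcofa : ∀ α, ∃ n, α ≤ a n) :
    Continuous (phi G f a hmono hcofa) := by
  apply Continuous.subtype_mk
  exact continuous_pi fun α => cont_psum G f a (hcofa α).choose α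

/-- The inverse limit is homeomorphic to the product of the discrete coset data. -/
noncomputable def decompHomeo (hmono : Monotone a) (hcofa : ∀ α, ∃ n, α ≤ a n) :
    invLimSys G f ≃ₜ (↥(DS G f a) × ∀ n, ↥(CS G f a n)) where
  toFun := psi G f a
  invFun := phi G f a hmono hcofa
  left_inv := fun x => psi_inj G f a hcofa (psi_phi G f a hmono hcofa (psi G f a x))
  right_inv := psi_phi G f a hmono hcofa
  continuous_toFun := cont_psi G f a
  continuous_invFun := cont_phi G f a hmono hcofa

end MainAux2

end InvLimAux


/-- Let `Λ` be a directed set admitting a countable cofinal subset and let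
`(G_α, f_{αβ})` be an inverse system of countable discrete abelian groups over `Λ`. Then the
inverse limit `lim G_α`, with the subspace topology from the product of the discrete topologies,
is homeomorphic to one of the following five spaces: a finite discrete space; `ℕ` with the
discrete topology; the Cantor space `ℕ → Bool`; the product `ℕ × (ℕ → Bool)` of the discrete
space `ℕ` with the Cantor space; or the Baire space `ℕ → ℕ`. -/
theorem invLimSys_homeomorphism_classification
    {Λ : Type*} [Preorder Λ] [IsDirected Λ (· ≤ ·)]
    (G : Λ → Type*) [∀ α, AddCommGroup (G α)] [∀ α, Countable (G α)]
    [∀ α, TopologicalSpace (G α)] [∀ α, DiscreteTopology (G α)]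
    (f : ∀ ⦃α β : Λ⦄, α ≤ β → (G β →+ G α))
    (hid : ∀ α, f (le_refl α) = AddMonoidHom.id (G α))
    (hcomp : ∀ ⦃α β γ : Λ⦄ (h₁ : α ≤ β) (h₂ : β ≤ γ), (f h₁).comp (f h₂) = f (h₁.trans h₂))
    (hcof : ∃ I : Set Λ, I.Countable ∧ ∀ α : Λ, ∃ β ∈ I, α ≤ β) :
    (∃ (F : Type) (_ : TopologicalSpace F) (_ : DiscreteTopology F),
        Finite F ∧ Nonempty (invLimSys G f ≃ₜ F)) ∨
    Nonempty (invLimSys G f ≃ₜ ℕ) ∨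
    Nonempty (invLimSys G f ≃ₜ (ℕ → Bool)) ∨
    Nonempty (invLimSys G f ≃ₜ ℕ × (ℕ → Bool)) ∨
    Nonempty (invLimSys G f ≃ₜ (ℕ → ℕ)) := by
  classical
  obtain ⟨I, hIc, hIcof⟩ := hcof
  by_cases hΛ : Nonempty Λ
  · obtain ⟨α₀⟩ := hΛ
    obtain ⟨β₀, hβ₀, -⟩ := hIcof α₀
    obtain ⟨e, he⟩ := hIc.exists_eq_range ⟨β₀, hβ₀⟩
    set a := InvLimAux.chain e with ha
    have hmono : Monotone a := InvLimAux.chain_mono e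
    have hcofa : ∀ α, ∃ n, α ≤ a n := by
      intro α
      obtain ⟨β, hβI, hαβ⟩ := hIcof α
      rw [he] at hβI
      obtain ⟨n, rfl⟩ := hβI
      exact ⟨n, le_trans hαβ (InvLimAux.le_chain e n)⟩
    haveI : Nonempty ↥(InvLimAux.DS G f a) := ⟨⟨_, ⟨0, rfl⟩⟩⟩
    haveI : ∀ n, Nonempty ↥(InvLimAux.CS G f a n) := fun n => ⟨⟨_, ⟨0, rfl, rfl⟩⟩⟩
    exact InvLimAux.FiveDisj.of_homeo (InvLimAux.decompHomeo G f a hmono hcofa)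
      InvLimAux.classify_prod
  · haveI : Subsingleton ↥(invLimSys G f) :=
      ⟨fun x y => Subtype.ext (funext fun α => absurd ⟨α⟩ hΛ)⟩
    exact Or.inl ⟨PUnit, inferInstance, inferInstance, inferInstance,
      ⟨InvLimAux.homeoPUnit⟩⟩
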